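/- Let I be a type of coordinate indices with a block assignment β : I → M into modalities, and let (E i)_{i∈I} be a family of types, each having at least two elements. Let F : (∀ i, E i) → (∀ i, E i) satisfy: (a) [block structure] for every i, if z and z' agree on all coordinates j with β j = β i, then (F z) i = (F z') i; and (b) [component-wise structure] there exist a map σ : I → I and, for each i, a bijection ψ_i : E (σ i) ≃ E i such that (F z) i = ψ_i (z (σ i)) for all z. Then β (σ i) = β i for every i; that is, the coordinate reassignment σ maps each modality block into itself. -/
import Mathlib


/-- Proposition (Resolving Block-Wise Permutation): if the indeterminacy map acts
block-wise on modalities and each component is an invertible function of a single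
coordinate, then the coordinate reassignment maps each modality block into itself. -/
theorem stmt5 {I M : Type*} (β : I → M) {E : I → Type*} [∀ i, Nontrivial (E i)]
    (F : (∀ i, E i) → (∀ i, E i))
    (hblock : ∀ (i : I) (z z' : ∀ i, E i),
      (∀ j, β j = β i → z j = z' j) → F z i = F z' i)
    (σ : I → I) (ψ : ∀ i, E (σ i) ≃ E i)
    (hcomp : ∀ (z : ∀ i, E i) (i : I), F z i = ψ i (z (σ i))) :
    ∀ i, β (σ i) = β i := by
  intro i
  by_contra hne
  classical
  have : Nonempty (∀ j, E j) := ⟨fun j => Classical.arbitrary (E j)⟩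
  obtain ⟨z⟩ := this
  obtain ⟨b, hb⟩ := exists_ne (z (σ i))
  set z' := Function.update z (σ i) b with hz'
  have heq : F z i = F z' i := by
    apply hblock
    intro j hj
    rw [hz', Function.update_of_ne]
    intro hji
    exact hne (hji ▸ hj)
  rw [hcomp, hcomp] at heq
  have : z (σ i) = z' (σ i) := (ψ i).injective heq
  rw [hz', Function.update_self] at this
  exact hb this.symm
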